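/- Semi-dynamic half-way point invariance: for any threshold T with 0 ≤ T ≤ U_c, the bidirectional algorithm that extends forward labels while their critical-resource consumption is ≤ T and backward labels while their consumption is ≤ U_c − T, and then joins across a single arc, enumerates every resource-feasible elementary s-d path; hence the optimal value returned is independent of the choice of T. -/

import Mathlib

/-- Cost of a walk. -/
def walkCost {V : Type} (c : V → V → ℝ) (p : List V) : ℝ :=
  ((p.zip p.tail).map fun q => c q.1 q.2).sum

/-- Critical-resource consumption of a walk. -/
def critRes {V : Type} (r : V → V → ℝ) (p : List V) : ℝ :=
  ((p.zip p.tail).map fun q => r q.1 q.2).sum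

/-- A walk from `s` to `d`. -/
def IsWalk {V : Type} (A : V → V → Prop) (s d : V) (p : List V) : Prop :=
  p.Chain' A ∧ p.head? = some s ∧ p.getLast? = some d

/-- The set of `s`-`d` paths enumerated by the bidirectional join with
threshold `T`: a forward elementary prefix `q₁` (from `s` to some `i`) with
critical consumption `≤ T`, a backward elementary suffix `q₂` (from some `j`
to `d`) with critical consumption `≤ Uc − T`, joined across the arc `(i,j)`,
with disjoint node sets and total critical consumption `≤ Uc`. -/
def JoinSet {V : Type} [DecidableEq V] (A : V → V → Prop) (r : V → V → ℝ)
    (Uc : ℝ) (s d : V) (T : ℝ) : Set (List V) :=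
  {p | ∃ (i j : V) (q₁ q₂ : List V),
    IsWalk A s i q₁ ∧ q₁.Nodup ∧ IsWalk A j d q₂ ∧ q₂.Nodup ∧ A i j ∧
    q₁.toFinset ∩ q₂.toFinset = ∅ ∧
    critRes r q₁ ≤ T ∧ critRes r q₂ ≤ Uc - T ∧
    critRes r q₁ + r i j + critRes r q₂ ≤ Uc ∧
    p = q₁ ++ q₂}

/-- Semi-dynamic half-way point invariance: for any threshold `0 ≤ T ≤ Uc`,
the bidirectional join enumerates exactly the resource-feasible elementary
`s`-`d` paths; hence the optimal value is independent of the choice of `T`. -/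
lemma critRes_cons_cons {V : Type} (r : V → V → ℝ) (a b : V) (l : List V) :
    critRes r (a :: b :: l) = r a b + critRes r (b :: l) := by
  simp [critRes]

lemma critRes_singleton {V : Type} (r : V → V → ℝ) (a : V) : critRes r [a] = 0 := by
  simp [critRes]

lemma critRes_append {V : Type} (r : V → V → ℝ) :
    ∀ (q₁ : List V) (i j : V) (q₂ : List V), q₁.getLast? = some i →
      q₂.head? = some j →
      critRes r (q₁ ++ q₂) = critRes r q₁ + r i j + critRes r q₂
  | [], i, j, q₂, h, _ => by simp at h
  | [a], i, j, q₂, h, h' => by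
      simp at h
      obtain ⟨t, rfl⟩ : ∃ t, q₂ = j :: t := by
        cases q₂ with
        | nil => simp at h'
        | cons x t => simp at h'; exact ⟨t, by rw [h']⟩
      subst h
      simp [critRes_cons_cons, critRes_singleton]
  | a :: b :: l, i, j, q₂, h, h' => by
      have hl : (b :: l).getLast? = some i := by
        rw [← h]; simp [List.getLast?_cons_cons]
      have := critRes_append r (b :: l) i j q₂ hl h'
      simp only [List.cons_append, critRes_cons_cons] at *
      rw [this]; ring

/-- The splitting lemma. -/
lemma split_walk {V : Type} (A : V → V → Prop) (r : V → V → ℝ)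
    (hpos : ∀ u v, 0 < r u v) (d : V) :
    ∀ (p : List V) (s : V) (T Uc : ℝ), IsWalk A s d p → 2 ≤ p.length →
      0 ≤ T → T ≤ Uc → critRes r p ≤ Uc →
      ∃ (i j : V) (q₁ q₂ : List V), p = q₁ ++ q₂ ∧
        IsWalk A s i q₁ ∧ IsWalk A j d q₂ ∧ A i j ∧
        critRes r q₁ ≤ T ∧ critRes r q₂ ≤ Uc - T ∧
        critRes r q₁ + r i j + critRes r q₂ = critRes r p
  | [], s, T, Uc, hw, hlen, _, _, _ => by simp at hlen
  | [a], s, T, Uc, hw, hlen, _, _, _ => by simp at hlen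
  | a :: b :: l, s, T, Uc, hw, hlen, hT0, hTU, hU => by
      obtain ⟨hc, hh, hl⟩ := hw
      have has : a = s := by simpa using hh
      subst has
      have hab : A a b := (List.isChain_cons_cons.mp hc).1
      have hcbl : (b :: l).Chain' A := (List.isChain_cons_cons.mp hc).2
      have hlbl : (b :: l).getLast? = some d := by
        rw [← hl]; simp [List.getLast?_cons_cons]
      have hcrit : critRes r (a :: b :: l) = r a b + critRes r (b :: l) :=
        critRes_cons_cons r a b l
      by_cases hT : r a b ≤ T
      · cases l with
        | nil =>
          -- q₁ = [a], q₂ = [b]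
          have hbd : b = d := by simpa using hl
          refine ⟨a, b, [a], [b], by simp, ⟨by simp [List.Chain'], by simp, by simp⟩,
            ⟨by simp [List.Chain'], by simp, by simp [hbd]⟩, hab, ?_, ?_, ?_⟩
          · rw [critRes_singleton]; exact hT0
          · rw [critRes_singleton]; linarith
          · simp [critRes_singleton, critRes_cons_cons]
        | cons c l' =>
          -- recurse
          have hwb : IsWalk A b d (b :: c :: l') := ⟨hcbl, by simp, hlbl⟩
          have hrec := split_walk A r hpos d (b :: c :: l') b (T - r a b) (Uc - r a b) hwb
            (by simp) (by linarith) (by linarith) (by rw [hcrit] at hU; linarith)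
          obtain ⟨i, j, q₁, q₂, heq, ⟨hc1, hh1, hl1⟩, hw2, hij, hcr1, hcr2, hsum⟩ := hrec
          obtain ⟨t, rfl⟩ : ∃ t, q₁ = b :: t := by
            cases q₁ with
            | nil => simp at hh1
            | cons x t => simp at hh1; exact ⟨t, by rw [hh1]⟩
          refine ⟨i, j, a :: b :: t, q₂, by rw [List.cons_append, heq],
            ⟨List.isChain_cons_cons.mpr ⟨hab, hc1⟩, by simp, by rw [← hl1]; simp [List.getLast?_cons_cons]⟩,
            hw2, hij, ?_, ?_, ?_⟩
          · rw [critRes_cons_cons]; linarith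
          · linarith
          · rw [critRes_cons_cons, hcrit, heq, critRes_append r (b :: t) i j q₂ hl1 hw2.2.1]
            linarith
      · -- q₁ = [a], q₂ = b :: l
        push_neg at hT
        refine ⟨a, b, [a], b :: l, by simp, ⟨by simp [List.Chain'], by simp, by simp⟩,
          ⟨hcbl, by simp, hlbl⟩, hab, ?_, ?_, ?_⟩
        · rw [critRes_singleton]; exact hT0
        · rw [hcrit] at hU; linarith
        · rw [critRes_singleton, hcrit]; ring

theorem stmt17 {V : Type} [DecidableEq V]
    (A : V → V → Prop) (c : V → V → ℝ) (r : V → V → ℝ) (Uc : ℝ)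
    (hpos : ∀ u v, 0 < r u v) (s d : V) (hsd : s ≠ d) :
    (∀ T, 0 ≤ T → T ≤ Uc →
      JoinSet A r Uc s d T =
        {p | IsWalk A s d p ∧ p.Nodup ∧ critRes r p ≤ Uc}) ∧
    (∀ T T', 0 ≤ T → T ≤ Uc → 0 ≤ T' → T' ≤ Uc →
      sInf {x : EReal | ∃ p ∈ JoinSet A r Uc s d T, (walkCost c p : EReal) = x} =
      sInf {x : EReal | ∃ p ∈ JoinSet A r Uc s d T', (walkCost c p : EReal) = x}) := by
  have key : ∀ T, 0 ≤ T → T ≤ Uc →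
      JoinSet A r Uc s d T =
        {p | IsWalk A s d p ∧ p.Nodup ∧ critRes r p ≤ Uc} := by
    intro T hT0 hTU
    ext p
    constructor
    · rintro ⟨i, j, q₁, q₂, ⟨hc1, hh1, hl1⟩, hn1, ⟨hc2, hh2, hl2⟩, hn2, hij, hdisj,
        _, _, hsum, rfl⟩
      have hq₂ne : q₂ ≠ [] := by rintro rfl; simp at hh2
      have hq₁ne : q₁ ≠ [] := by rintro rfl; simp at hh1
      refine ⟨⟨?_, ?_, ?_⟩, ?_, ?_⟩
      · rw [List.Chain', List.isChain_append]
        refine ⟨hc1, hc2, fun x hx y hy => ?_⟩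
        rw [hl1] at hx; rw [hh2] at hy
        simp at hx hy; subst hx; subst hy; exact hij
      · rw [List.head?_append]
        rw [hh1]; rfl
      · rw [List.getLast?_append, hl2]; rfl
      · rw [List.nodup_append]
        exact ⟨hn1, hn2, List.disjoint_iff_ne.mp (List.disjoint_toFinset_iff_disjoint.mp
          (Finset.disjoint_iff_inter_eq_empty.mpr hdisj))⟩
      · rw [critRes_append r q₁ i j q₂ hl1 hh2]; exact hsum
    · rintro ⟨hw, hnd, hU⟩
      have hne : p ≠ [] := by rintro rfl; simp [IsWalk] at hw
      have hlen : 2 ≤ p.length := by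
        rcases p with _ | ⟨a, _ | ⟨b, l⟩⟩
        · simp at hne
        · obtain ⟨_, hh, hl⟩ := hw
          simp at hh hl
          exact absurd (hh.symm.trans hl) hsd
        · simp
      obtain ⟨i, j, q₁, q₂, heq, hw1, hw2, hij, hcr1, hcr2, hsum⟩ :=
        split_walk A r hpos d p s T Uc hw hlen hT0 hTU hU
      subst heq
      have hnd' := List.nodup_append.mp hnd
      exact ⟨i, j, q₁, q₂, hw1, hnd'.1, hw2, hnd'.2.1, hij,
        Finset.disjoint_iff_inter_eq_empty.mp
          (List.disjoint_toFinset_iff_disjoint.mpr (List.disjoint_iff_ne.mpr hnd'.2.2)),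
        hcr1, hcr2, by rw [hsum]; exact hU, rfl⟩
  exact ⟨key, fun T T' h1 h2 h3 h4 => by rw [key T h1 h2, key T' h3 h4]⟩
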